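/- Consider the weighted maximum likelihood estimator of the ARP transition function from off-policy data: P̂_n(z,z') = (Σ_{i,t} 1{φ(S_t^i)=z, φ(S_{t+1}^i)=z'} ρ_{0:t}^i) / (Σ_{i,t} 1{φ(S_t^i)=z} ρ_{0:t}^i), where trajectories are i.i.d. under π_b and ρ_{0:t}^i = Π_{j=0}^t π_e(S_j^i,A_j^i)/π_b(S_j^i,A_j^i). Under the support assumption (π_b(s,a)=0 ⇒ π_e(s,a)=0) and if Σ_t Pr(φ(S_t)=z; π_e) ≠ 0, then P̂_n(z,z') converges almost surely to P_φ^{π_e}(z,z') = (Σ_t Pr(φ(S_t)=z, φ(S_{t+1})=z'; π_e)) / (Σ_t Pr(φ(S_t)=z; π_e)). -/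

import Mathlib

open Finset MeasureTheory Filter Topology

/-- Probability of a trajectory prefix `(S_0, A_0, S_1, ..., A_{t-1}, S_t)` of a finite
MDP `(S, A, p, r, η)` under a stationary policy `π`. -/
def trajProb {S A : Type*} [Fintype A] (η : S → ℝ) (p : S → A → S → ℝ) (π : S → A → ℝ)
    (t : ℕ) (s : Fin (t + 1) → S) (a : Fin t → A) : ℝ :=
  η (s 0) * ∏ j : Fin t, (π (s j.castSucc) (a j) * p (s j.castSucc) (a j) (s j.succ))

/-- The importance weight `ρ_{0:t} = Π_{j=0}^t π_e(S_j,A_j)/π_b(S_j,A_j)` of a trajectory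
of horizon `T`, for `t : Fin (T+1)`. -/
noncomputable def isWeight {S A : Type*} (πb πe : S → A → ℝ) (T : ℕ)
    (h : (Fin (T + 2) → S) × (Fin (T + 1) → A)) (t : Fin (T + 1)) : ℝ :=
  ∏ j : Fin (T + 1),
    if (j : ℕ) ≤ (t : ℕ) then πe (h.1 j.castSucc) (h.2 j) / πb (h.1 j.castSucc) (h.2 j)
    else 1

section Comb

variable {S A : Type*} [Fintype S] [Fintype A]

/-- Trajectory probability with a time-dependent policy. -/
def tpAux (η : S → ℝ) (p : S → A → S → ℝ) (n : ℕ) (π : Fin n → S → A → ℝ)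
    (s : Fin (n + 1) → S) (a : Fin n → A) : ℝ :=
  η (s 0) * ∏ j : Fin n, (π j (s j.castSucc) (a j) * p (s j.castSucc) (a j) (s j.succ))

def mySnocEquiv (X : Type*) (m : ℕ) : ((Fin m → X) × X) ≃ (Fin (m + 1) → X) where
  toFun q := Fin.snoc q.1 q.2
  invFun f := (Fin.init f, f (Fin.last m))
  left_inv q := by simp
  right_inv f := by simp

lemma snoc_at_lt {X : Type*} {m : ℕ} (f : Fin m → X) (y : X) (j : Fin (m + 1))
    (hj : (j : ℕ) < m) : (Fin.snoc f y : Fin (m + 1) → X) j = f ⟨j, hj⟩ := by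
  obtain ⟨jv, hlt⟩ := j
  exact Fin.snoc_castSucc (α := fun _ => X) (p := f) (x := y) (i := ⟨jv, hj⟩)

lemma tpAux_snoc (η : S → ℝ) (p : S → A → S → ℝ) (m : ℕ) (π : Fin (m + 1) → S → A → ℝ)
    (s' : Fin (m + 1) → S) (x : S) (a' : Fin m → A) (b : A) :
    tpAux η p (m + 1) π (Fin.snoc s' x) (Fin.snoc a' b)
      = tpAux η p m (fun j => π j.castSucc) s' a'
          * (π (Fin.last m) (s' (Fin.last m)) b * p (s' (Fin.last m)) b x) := by
  have h0 : (Fin.snoc s' x : Fin (m + 2) → S) 0 = s' 0 := by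
    rw [show (0 : Fin (m + 2)) = Fin.castSucc 0 by rfl, Fin.snoc_castSucc]
  unfold tpAux
  rw [Fin.prod_univ_castSucc]
  have hfac : ∀ j : Fin m,
      π j.castSucc ((Fin.snoc s' x : Fin (m+2) → S) j.castSucc.castSucc)
          ((Fin.snoc a' b : Fin (m+1) → A) j.castSucc)
        * p ((Fin.snoc s' x : Fin (m+2) → S) j.castSucc.castSucc)
          ((Fin.snoc a' b : Fin (m+1) → A) j.castSucc)
          ((Fin.snoc s' x : Fin (m+2) → S) j.castSucc.succ)
      = π j.castSucc (s' j.castSucc) (a' j) * p (s' j.castSucc) (a' j) (s' j.succ) := by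
    intro j
    rw [Fin.succ_castSucc, Fin.snoc_castSucc, Fin.snoc_castSucc, Fin.snoc_castSucc]
  have hlast : (Fin.snoc s' x : Fin (m+2) → S) (Fin.last m).castSucc = s' (Fin.last m) :=
    Fin.snoc_castSucc _ _ _
  have hlast2 : (Fin.snoc s' x : Fin (m+2) → S) (Fin.last m).succ = x := by
    rw [Fin.succ_last, Fin.snoc_last]
  rw [Finset.prod_congr rfl (fun j _ => hfac j), hlast, hlast2, Fin.snoc_last, h0, mul_assoc]

lemma peel (η : S → ℝ) (p : S → A → S → ℝ) (hp1 : ∀ s a, ∑ s', p s a s' = 1)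
    (m : ℕ) (π : Fin (m + 1) → S → A → ℝ) (hπ : ∀ s, ∑ b, π (Fin.last m) s b = 1)
    (χ : (Fin (m + 1) → S) → (Fin m → A) → ℝ) :
    (∑ s : Fin (m + 2) → S, ∑ a : Fin (m + 1) → A,
        tpAux η p (m + 1) π s a * χ (Fin.init s) (Fin.init a))
      = ∑ s : Fin (m + 1) → S, ∑ a : Fin m → A,
          tpAux η p m (fun j => π j.castSucc) s a * χ s a := by
  have hs : ∀ (F : (Fin (m + 2) → S) → ℝ),
      ∑ s, F s = ∑ s' : Fin (m + 1) → S, ∑ x : S, F (Fin.snoc s' x) := by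
    intro F
    rw [← Equiv.sum_comp (mySnocEquiv S (m + 1)) F, Fintype.sum_prod_type]
    rfl
  have ha : ∀ (F : (Fin (m + 1) → A) → ℝ),
      ∑ a, F a = ∑ a' : Fin m → A, ∑ b : A, F (Fin.snoc a' b) := by
    intro F
    rw [← Equiv.sum_comp (mySnocEquiv A m) F, Fintype.sum_prod_type]
    rfl
  rw [hs]
  refine Finset.sum_congr rfl (fun s' _ => ?_)
  rw [Finset.sum_comm, ha]
  refine Finset.sum_congr rfl (fun a' _ => ?_)
  simp only [tpAux_snoc, Fin.init_snoc]
  have hb : ∀ b : A, ∑ x : S,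
      tpAux η p m (fun j => π j.castSucc) s' a'
          * (π (Fin.last m) (s' (Fin.last m)) b * p (s' (Fin.last m)) b x) * χ s' a'
      = (tpAux η p m (fun j => π j.castSucc) s' a' * χ s' a')
          * π (Fin.last m) (s' (Fin.last m)) b := by
    intro b
    have : ∀ x : S,
        tpAux η p m (fun j => π j.castSucc) s' a'
            * (π (Fin.last m) (s' (Fin.last m)) b * p (s' (Fin.last m)) b x) * χ s' a'
        = ((tpAux η p m (fun j => π j.castSucc) s' a' * χ s' a')
            * π (Fin.last m) (s' (Fin.last m)) b) * p (s' (Fin.last m)) b x := by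
      intro x; ring
    rw [Finset.sum_congr rfl (fun x _ => this x), ← Finset.mul_sum, hp1, mul_one]
  rw [Finset.sum_congr rfl (fun b _ => hb b), ← Finset.mul_sum, hπ, mul_one]


lemma tpAux_total (η : S → ℝ) (hη1 : ∑ s, η s = 1) (p : S → A → S → ℝ)
    (hp1 : ∀ s a, ∑ s', p s a s' = 1) :
    ∀ (n : ℕ) (π : Fin n → S → A → ℝ), (∀ j s, ∑ b, π j s b = 1) →
      ∑ s : Fin (n + 1) → S, ∑ a : Fin n → A, tpAux η p n π s a = 1 := by
  intro n
  induction n with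
  | zero =>
    intro π hπ
    have h1 : ∑ s : Fin 1 → S, ∑ a : Fin 0 → A, tpAux η p 0 π s a
        = ∑ s : Fin 1 → S, η (s 0) := by
      refine Finset.sum_congr rfl fun s _ => ?_
      simp [tpAux]
    rw [h1, ← Equiv.sum_comp (Equiv.funUnique (Fin 1) S).symm (fun s : Fin 1 → S => η (s 0))]
    simpa using hη1
  | succ m ih =>
    intro π hπ
    have hpeel := peel η p hp1 m π (fun s => hπ _ s) (fun _ _ => (1 : ℝ))
    simp only [mul_one] at hpeel
    rw [hpeel]
    exact ih _ (fun j s => hπ _ s)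

lemma marg (η : S → ℝ) (p : S → A → S → ℝ) (hp1 : ∀ s a, ∑ s', p s a s' = 1) :
    ∀ (n : ℕ) (π π' : Fin n → S → A → ℝ),
      (∀ j s, ∑ b, π j s b = 1) → (∀ j s, ∑ b, π' j s b = 1) →
      ∀ (t : ℕ), (∀ j : Fin n, (j : ℕ) ≤ t → π j = π' j) →
      ∀ (χ : (Fin (n + 1) → S) → (Fin n → A) → ℝ),
      (∀ s s' a a', (∀ j : Fin (n + 1), (j : ℕ) ≤ t + 1 → s j = s' j) →
        (∀ j : Fin n, (j : ℕ) ≤ t → a j = a' j) → χ s a = χ s' a') →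
      (∑ s, ∑ a, tpAux η p n π s a * χ s a) = ∑ s, ∑ a, tpAux η p n π' s a * χ s a := by
  intro n
  induction n with
  | zero =>
    intro π π' _ _ t hag χ hχ
    refine Finset.sum_congr rfl fun s _ => Finset.sum_congr rfl fun a _ => ?_
    simp [tpAux]
  | succ m ih =>
    intro π π' hπ hπ' t hag χ hχ
    by_cases hmt : m ≤ t
    · refine Finset.sum_congr rfl fun s _ => Finset.sum_congr rfl fun a _ => ?_
      have hpe : π = π' := funext fun j => hag j (le_trans (Nat.le_of_lt_succ j.isLt) hmt)
      rw [hpe]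
    · push_neg at hmt
      have hm1 : t + 1 ≤ m := hmt
      set χ' : (Fin (m + 1) → S) → (Fin m → A) → ℝ :=
        fun s' a' => χ (Fin.snoc s' (s' (Fin.last m))) (Fin.snoc a' (a' ⟨0, by omega⟩))
        with hχ'def
      have hrw : ∀ (s : Fin (m + 2) → S) (a : Fin (m + 1) → A),
          χ s a = χ' (Fin.init s) (Fin.init a) := by
        intro s a
        refine hχ _ _ _ _ (fun j hj => ?_) (fun j hj => ?_)
        · rw [snoc_at_lt _ _ j (by omega)]
          rfl
        · rw [snoc_at_lt _ _ j (by omega)]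
          rfl
      have hχ'' : ∀ s s' a a', (∀ j : Fin (m + 1), (j : ℕ) ≤ t + 1 → s j = s' j) →
          (∀ j : Fin m, (j : ℕ) ≤ t → a j = a' j) → χ' s a = χ' s' a' := by
        intro s s' a a' hs ha1
        refine hχ _ _ _ _ (fun j hj => ?_) (fun j hj => ?_)
        · rw [snoc_at_lt _ _ j (by omega), snoc_at_lt _ _ j (by omega)]
          exact hs ⟨(j : ℕ), by omega⟩ (by simpa using hj)
        · rw [snoc_at_lt _ _ j (by omega), snoc_at_lt _ _ j (by omega)]
          exact ha1 ⟨(j : ℕ), by omega⟩ (by simpa using hj)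
      have hag' : ∀ j : Fin m, (j : ℕ) ≤ t → (fun j : Fin m => π j.castSucc) j
          = (fun j : Fin m => π' j.castSucc) j := by
        intro j hj
        exact hag j.castSucc (by simpa using hj)
      calc ∑ s, ∑ a, tpAux η p (m + 1) π s a * χ s a
          = ∑ s : Fin (m + 2) → S, ∑ a : Fin (m + 1) → A,
              tpAux η p (m + 1) π s a * χ' (Fin.init s) (Fin.init a) :=
            Finset.sum_congr rfl fun s _ => Finset.sum_congr rfl fun a _ => by rw [hrw]
        _ = ∑ s, ∑ a, tpAux η p m (fun j => π j.castSucc) s a * χ' s a :=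
            peel η p hp1 m π (fun s => hπ _ s) χ'
        _ = ∑ s, ∑ a, tpAux η p m (fun j => π' j.castSucc) s a * χ' s a :=
            ih _ _ (fun j s => hπ _ s) (fun j s => hπ' _ s) t hag' χ' hχ''
        _ = ∑ s : Fin (m + 2) → S, ∑ a : Fin (m + 1) → A,
              tpAux η p (m + 1) π' s a * χ' (Fin.init s) (Fin.init a) :=
            (peel η p hp1 m π' (fun s => hπ' _ s) χ').symm
        _ = ∑ s, ∑ a, tpAux η p (m + 1) π' s a * χ s a :=
            Finset.sum_congr rfl fun s _ => Finset.sum_congr rfl fun a _ => by rw [hrw]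

end Comb


lemma law_aux {Ω : Type*} [MeasurableSpace Ω] (μ : Measure Ω) [IsProbabilityMeasure μ]
    {ι : Type*} [Fintype ι] (w : ι → ℝ) (hw1 : ∑ x, w x = 1)
    (Y : Ω → ι) (hlaw : ∀ f : ι → ℝ, ∫ ω, f (Y ω) ∂μ = ∑ x, w x * f x) :
    (∀ f : ι → ℝ, Integrable (fun ω => f (Y ω)) μ)
      ∧ (∀ x : ι, μ (Y ⁻¹' {x}) = ENNReal.ofReal (w x))
      ∧ (∀ x : ι, NullMeasurableSet (Y ⁻¹' {x}) μ) := by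
  classical
  have hsumg : ∑ x, w x * (if w x = 0 then (0 : ℝ) else 1) = 1 := by
    calc ∑ x, w x * (if w x = 0 then (0 : ℝ) else 1) = ∑ x, w x :=
          Finset.sum_congr rfl fun x _ => by by_cases h : w x = 0 <;> simp [h]
      _ = 1 := hw1
  have hg_int : Integrable (fun ω => (if w (Y ω) = 0 then (0 : ℝ) else 1)) μ := by
    by_contra hni
    have h0 := hlaw (fun x => if w x = 0 then (0 : ℝ) else 1)
    rw [integral_undef hni, hsumg] at h0
    exact one_ne_zero h0.symm
  have hgood : ∀ᵐ ω ∂μ, w (Y ω) ≠ 0 := by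
    have hnn : 0 ≤ fun ω => (1 : ℝ) - (if w (Y ω) = 0 then (0 : ℝ) else 1) := by
      intro ω
      by_cases h : w (Y ω) = 0 <;> simp [h]
    have hint2 : Integrable (fun ω => (1 : ℝ) - (if w (Y ω) = 0 then (0 : ℝ) else 1)) μ :=
      (integrable_const 1).sub hg_int
    have hz : ∫ ω, ((1 : ℝ) - if w (Y ω) = 0 then (0 : ℝ) else 1) ∂μ = 0 := by
      rw [integral_sub (integrable_const 1) hg_int, integral_const,
        hlaw (fun x => if w x = 0 then (0 : ℝ) else 1), hsumg]
      simp
    have hae := (integral_eq_zero_iff_of_nonneg hnn hint2).1 hz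
    filter_upwards [hae] with ω hω
    intro h0
    simp [h0] at hω
  have hbadnull : μ {ω | w (Y ω) = 0} = 0 := by
    have := hgood
    rw [ae_iff] at this
    simpa using this
  -- indicator of a single good atom is integrable
  have hind_int : ∀ x : ι, w x ≠ 0 →
      Integrable (fun ω => if Y ω = x then (1 : ℝ) else 0) μ := by
    intro x hx
    by_contra hni
    have h0 := hlaw (fun y => if y = x then (1 : ℝ) else 0)
    rw [integral_undef hni] at h0
    have hs : ∑ y, w y * (if y = x then (1 : ℝ) else 0) = w x := by
      simp [mul_ite]
    rw [hs] at h0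
    exact hx h0.symm
  have hpre : ∀ x : ι, μ (Y ⁻¹' {x}) = ENNReal.ofReal (w x) := by
    intro x
    by_cases hx : w x = 0
    · have hsub : Y ⁻¹' {x} ⊆ {ω | w (Y ω) = 0} := by
        intro ω hω
        simp only [Set.mem_preimage, Set.mem_singleton_iff] at hω
        simp [Set.mem_setOf_eq, hω, hx]
      rw [measure_mono_null hsub hbadnull, hx]
      simp
    · have hint := hind_int x hx
      have hseteq : Y ⁻¹' {x} = (fun ω => if Y ω = x then (1 : ℝ) else 0) ⁻¹' {1} := by
        ext ω
        by_cases h : Y ω = x <;> simp [h]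
      have hnm : NullMeasurableSet (Y ⁻¹' {x}) μ := by
        rw [hseteq]
        exact hint.aestronglyMeasurable.aemeasurable.nullMeasurable (measurableSet_singleton 1)
      have hindic : (fun ω => if Y ω = x then (1 : ℝ) else 0)
          = (Y ⁻¹' {x}).indicator (1 : Ω → ℝ) := by
        ext ω
        by_cases h : Y ω = x <;> simp [Set.indicator, h]
      have htm := hnm.toMeasurable_ae_eq
      have hcalc : w x = (μ (Y ⁻¹' {x})).toReal := by
        have h1 := hlaw (fun y => if y = x then (1 : ℝ) else 0)
        have hs : ∑ y, w y * (if y = x then (1 : ℝ) else 0) = w x := by simp [mul_ite]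
        rw [hs] at h1
        rw [← h1]
        calc ∫ ω, (if Y ω = x then (1 : ℝ) else 0) ∂μ
            = ∫ ω, (toMeasurable μ (Y ⁻¹' {x})).indicator (1 : Ω → ℝ) ω ∂μ := by
              rw [hindic]
              exact integral_congr_ae (indicator_ae_eq_of_ae_eq_set htm.symm)
          _ = (μ (toMeasurable μ (Y ⁻¹' {x}))).toReal :=
              integral_indicator_one (measurableSet_toMeasurable μ _)
          _ = (μ (Y ⁻¹' {x})).toReal := by rw [measure_toMeasurable]
      rw [hcalc, ENNReal.ofReal_toReal (measure_ne_top μ _)]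
  have hnms : ∀ x : ι, NullMeasurableSet (Y ⁻¹' {x}) μ := by
    intro x
    by_cases hx : w x = 0
    · refine NullMeasurableSet.of_null ?_
      rw [hpre x, hx]
      simp
    · have hint := hind_int x hx
      have hseteq : Y ⁻¹' {x} = (fun ω => if Y ω = x then (1 : ℝ) else 0) ⁻¹' {1} := by
        ext ω
        by_cases h : Y ω = x <;> simp [h]
      rw [hseteq]
      exact hint.aestronglyMeasurable.aemeasurable.nullMeasurable (measurableSet_singleton 1)
  refine ⟨?_, hpre, hnms⟩
  intro f
  have hF : Integrable (fun ω => ∑ x : ι,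
      (if w x = 0 then (0 : ℝ) else f x * (if Y ω = x then 1 else 0))) μ := by
    refine integrable_finset_sum _ fun x _ => ?_
    by_cases hx : w x = 0
    · simp only [hx, if_true]
      exact integrable_const 0
    · simp only [hx, if_false]
      exact (hind_int x hx).const_mul (f x)
  refine hF.congr ?_
  filter_upwards [hgood] with ω hω
  have : ∑ x : ι, (if w x = 0 then (0 : ℝ) else f x * (if Y ω = x then 1 else 0))
      = f (Y ω) := by
    rw [Finset.sum_eq_single (Y ω)]
    · simp [hω]
    · intro y _ hy
      have : Y ω ≠ y := fun h => hy h.symm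
      by_cases hw : w y = 0 <;> simp [hw, this]
    · intro h
      exact absurd (Finset.mem_univ _) h
  rw [this]

lemma law_preimage {Ω : Type*} [MeasurableSpace Ω] (μ : Measure Ω) [IsProbabilityMeasure μ]
    {ι : Type*} [Fintype ι] (w : ι → ℝ) (hw1 : ∑ x, w x = 1)
    (Y : Ω → ι) (hlaw : ∀ f : ι → ℝ, ∫ ω, f (Y ω) ∂μ = ∑ x, w x * f x)
    (f : ι → ℝ) (E : Set ℝ) :
    μ ((fun ω => f (Y ω)) ⁻¹' E)
      = ∑ x : ι, E.indicator (fun _ => ENNReal.ofReal (w x)) (f x) := by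
  classical
  obtain ⟨-, hpre, hnms⟩ := law_aux μ w hw1 Y hlaw
  have hind : ∀ x : ι, E.indicator (fun _ => ENNReal.ofReal (w x)) (f x)
      = if f x ∈ E then ENNReal.ofReal (w x) else 0 := fun x => Set.indicator_apply _ _ _
  rw [Finset.sum_congr rfl fun x _ => hind x, ← Finset.sum_filter]
  have hset : (fun ω => f (Y ω)) ⁻¹' E
      = ⋃ x ∈ Finset.univ.filter (fun x => f x ∈ E), Y ⁻¹' {x} := by
    ext ω
    simp only [Set.mem_preimage, Set.mem_iUnion, Finset.mem_filter, Finset.mem_univ, true_and,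
      Set.mem_singleton_iff]
    constructor
    · intro h
      exact ⟨Y ω, h, rfl⟩
    · rintro ⟨x, hx, rfl⟩
      exact hx
  rw [hset, measure_biUnion_finset₀ ?_ (fun x _ => hnms x)]
  · exact Finset.sum_congr rfl fun x _ => hpre x
  · intro x hx y hy hxy
    have hd : Disjoint ({x} : Set ι) {y} := by simp [hxy]
    exact (hd.preimage Y).aedisjoint




section Comb
variable {S A : Type*} [Fintype S] [Fintype A]


lemma trajProb_eq_tpAux (η : S → ℝ) (p : S → A → S → ℝ) (π : S → A → ℝ) (n : ℕ)
    (s : Fin (n + 1) → S) (a : Fin n → A) :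
    trajProb η p π n s a = tpAux η p n (fun _ => π) s a := rfl

lemma weight_mul (η : S → ℝ) (p : S → A → S → ℝ) (πb πe : S → A → ℝ)
    (hsupp : ∀ s a, πb s a = 0 → πe s a = 0) (T : ℕ) (t : Fin (T + 1))
    (h : (Fin (T + 2) → S) × (Fin (T + 1) → A)) :
    trajProb η p πb (T + 1) h.1 h.2 * isWeight πb πe T h t
      = tpAux η p (T + 1) (fun j => if (j : ℕ) ≤ (t : ℕ) then πe else πb) h.1 h.2 := by
  unfold trajProb isWeight tpAux
  rw [mul_assoc, ← Finset.prod_mul_distrib]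
  congr 1
  refine Finset.prod_congr rfl fun j _ => ?_
  by_cases hj : (j : ℕ) ≤ (t : ℕ)
  · simp only [hj, if_true]
    by_cases hb : πb (h.1 j.castSucc) (h.2 j) = 0
    · simp [hb, hsupp _ _ hb]
    · field_simp
  · simp [hj]

lemma change_sum (η : S → ℝ) (p : S → A → S → ℝ) (πb πe : S → A → ℝ)
    (hp1 : ∀ s a, ∑ s', p s a s' = 1)
    (hπb1 : ∀ s, ∑ a, πb s a = 1) (hπe1 : ∀ s, ∑ a, πe s a = 1)
    (hsupp : ∀ s a, πb s a = 0 → πe s a = 0) (T : ℕ) (t : Fin (T + 1))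
    (χ : (Fin (T + 2) → S) → ℝ)
    (hχ : ∀ s s', (∀ j : Fin (T + 2), (j : ℕ) ≤ (t : ℕ) + 1 → s j = s' j) → χ s = χ s') :
    ∑ h : (Fin (T + 2) → S) × (Fin (T + 1) → A),
        trajProb η p πb (T + 1) h.1 h.2 * (χ h.1 * isWeight πb πe T h t)
      = ∑ h : (Fin (T + 2) → S) × (Fin (T + 1) → A),
          trajProb η p πe (T + 1) h.1 h.2 * χ h.1 := by
  classical
  have hpt : ∀ h : (Fin (T + 2) → S) × (Fin (T + 1) → A),
      trajProb η p πb (T + 1) h.1 h.2 * (χ h.1 * isWeight πb πe T h t)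
        = tpAux η p (T + 1) (fun j => if (j : ℕ) ≤ (t : ℕ) then πe else πb) h.1 h.2 * χ h.1 := by
    intro h
    rw [← weight_mul η p πb πe hsupp T t h]
    ring
  rw [Finset.sum_congr rfl fun h _ => hpt h]
  have hre : ∀ h : (Fin (T + 2) → S) × (Fin (T + 1) → A),
      trajProb η p πe (T + 1) h.1 h.2 * χ h.1
        = tpAux η p (T + 1) (fun _ => πe) h.1 h.2 * χ h.1 := fun h => rfl
  rw [Finset.sum_congr rfl fun h _ => hre h, Fintype.sum_prod_type, Fintype.sum_prod_type]
  exact marg η p hp1 (T + 1)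
    (fun j => if (j : ℕ) ≤ (t : ℕ) then πe else πb) (fun _ => πe)
    (fun j s => by by_cases hj : (j : ℕ) ≤ (t : ℕ) <;> simp [hj, hπe1, hπb1])
    (fun j s => hπe1 s)
    (t : ℕ)
    (fun j hj => by simp [hj])
    (fun s a => χ s)
    (fun s s' a a' hs _ => hχ s s' hs)

end Comb
/-- Strong consistency of the weighted maximum likelihood (off-policy)
ARP transition estimator: with i.i.d. trajectories under `π_b`, importance weights
`ρ_{0:t}^i`, the support assumption `π_b(s,a)=0 → π_e(s,a)=0`, and
`Σ_t Pr(φ(S_t)=z; π_e) ≠ 0`, the estimator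
`P̂_n(z,z') = (Σ_{i,t} 1{φ(S_t^i)=z, φ(S_{t+1}^i)=z'} ρ_{0:t}^i) / (Σ_{i,t} 1{φ(S_t^i)=z} ρ_{0:t}^i)`
converges almost surely to
`P_φ^{π_e}(z,z') = (Σ_t Pr(φ(S_t)=z, φ(S_{t+1})=z'; π_e)) / (Σ_t Pr(φ(S_t)=z; π_e))`. -/
theorem weighted_mle_abstract_transition_consistent
    {S A Z : Type*} [Fintype S] [Fintype A] [DecidableEq Z]
    {Ω : Type*} [MeasurableSpace Ω] (μ : Measure Ω) [IsProbabilityMeasure μ]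
    (η : S → ℝ) (p : S → A → S → ℝ) (πb πe : S → A → ℝ) (T : ℕ)
    (hη0 : ∀ s, 0 ≤ η s) (hη1 : ∑ s, η s = 1)
    (hp0 : ∀ s a s', 0 ≤ p s a s') (hp1 : ∀ s a, ∑ s', p s a s' = 1)
    (hπb0 : ∀ s a, 0 ≤ πb s a) (hπb1 : ∀ s, ∑ a, πb s a = 1)
    (hπe0 : ∀ s a, 0 ≤ πe s a) (hπe1 : ∀ s, ∑ a, πe s a = 1)
    (hsupp : ∀ s a, πb s a = 0 → πe s a = 0)
    (φ : S → Z)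
    -- i.i.d. trajectories generated by the behavior policy `π_b`:
    (H : ℕ → Ω → (Fin (T + 2) → S) × (Fin (T + 1) → A))
    (hindep : ProbabilityTheory.iIndepFun
      (m := fun _ : ℕ => (⊤ : MeasurableSpace ((Fin (T + 2) → S) × (Fin (T + 1) → A)))) H μ)
    (hlaw : ∀ (i : ℕ) (f : (Fin (T + 2) → S) × (Fin (T + 1) → A) → ℝ),
      ∫ ω, f (H i ω) ∂μ
        = ∑ h : (Fin (T + 2) → S) × (Fin (T + 1) → A),
            trajProb η p πb (T + 1) h.1 h.2 * f h)
    (z z' : Z)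
    -- `Σ_t Pr(φ(S_t)=z; π_e) ≠ 0`:
    (hden : (∑ h : (Fin (T + 2) → S) × (Fin (T + 1) → A),
        trajProb η p πe (T + 1) h.1 h.2 *
          (∑ t : Fin (T + 1), if φ (h.1 t.castSucc) = z then (1 : ℝ) else 0)) ≠ 0) :
    ∀ᵐ ω ∂μ, Tendsto (fun n =>
        (∑ i ∈ Finset.range n, ∑ t : Fin (T + 1),
            (if φ ((H i ω).1 t.castSucc) = z ∧ φ ((H i ω).1 t.succ) = z' then (1 : ℝ) else 0) *
              isWeight πb πe T (H i ω) t) /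
          (∑ i ∈ Finset.range n, ∑ t : Fin (T + 1),
            (if φ ((H i ω).1 t.castSucc) = z then (1 : ℝ) else 0) *
              isWeight πb πe T (H i ω) t))
      atTop (𝓝 (
        (∑ h : (Fin (T + 2) → S) × (Fin (T + 1) → A),
            trajProb η p πe (T + 1) h.1 h.2 *
              (∑ t : Fin (T + 1),
                if φ (h.1 t.castSucc) = z ∧ φ (h.1 t.succ) = z' then (1 : ℝ) else 0)) /
          (∑ h : (Fin (T + 2) → S) × (Fin (T + 1) → A),
            trajProb η p πe (T + 1) h.1 h.2 *
              (∑ t : Fin (T + 1), if φ (h.1 t.castSucc) = z then (1 : ℝ) else 0)))) := by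
  classical
  set w : (Fin (T + 2) → S) × (Fin (T + 1) → A) → ℝ :=
    fun h => trajProb η p πb (T + 1) h.1 h.2 with hwdef
  have hw1 : ∑ h, w h = 1 := by
    rw [Fintype.sum_prod_type]
    exact tpAux_total η hη1 p hp1 (T + 1) (fun _ => πb) (fun j s => hπb1 s)
  have hlaw' : ∀ (i : ℕ) (f : (Fin (T + 2) → S) × (Fin (T + 1) → A) → ℝ),
      ∫ ω, f (H i ω) ∂μ = ∑ h, w h * f h := hlaw
  -- the two per-trajectory statistics
  set fnum : (Fin (T + 2) → S) × (Fin (T + 1) → A) → ℝ := fun h =>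
    ∑ t : Fin (T + 1),
      (if φ (h.1 t.castSucc) = z ∧ φ (h.1 t.succ) = z' then (1 : ℝ) else 0) *
        isWeight πb πe T h t with hfnumdef
  set fden : (Fin (T + 2) → S) × (Fin (T + 1) → A) → ℝ := fun h =>
    ∑ t : Fin (T + 1),
      (if φ (h.1 t.castSucc) = z then (1 : ℝ) else 0) * isWeight πb πe T h t with hfdendef
  -- change of measure for expectations
  have hExp : ∀ (g : Fin (T + 1) → (Fin (T + 2) → S) → ℝ),
      (∀ (t : Fin (T + 1)) (s s' : Fin (T + 2) → S),
        (∀ j : Fin (T + 2), (j : ℕ) ≤ (t : ℕ) + 1 → s j = s' j) → g t s = g t s') →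
      (∑ h : (Fin (T + 2) → S) × (Fin (T + 1) → A),
          trajProb η p πb (T + 1) h.1 h.2 * (∑ t, g t h.1 * isWeight πb πe T h t))
        = ∑ h : (Fin (T + 2) → S) × (Fin (T + 1) → A),
            trajProb η p πe (T + 1) h.1 h.2 * (∑ t, g t h.1) := by
    intro g hg
    calc ∑ h : (Fin (T + 2) → S) × (Fin (T + 1) → A),
            trajProb η p πb (T + 1) h.1 h.2 * (∑ t, g t h.1 * isWeight πb πe T h t)
        = ∑ h : (Fin (T + 2) → S) × (Fin (T + 1) → A), ∑ t,
            trajProb η p πb (T + 1) h.1 h.2 * (g t h.1 * isWeight πb πe T h t) := by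
          exact Finset.sum_congr rfl fun h _ => Finset.mul_sum _ _ _
      _ = ∑ t, ∑ h : (Fin (T + 2) → S) × (Fin (T + 1) → A),
            trajProb η p πb (T + 1) h.1 h.2 * (g t h.1 * isWeight πb πe T h t) :=
          Finset.sum_comm
      _ = ∑ t, ∑ h : (Fin (T + 2) → S) × (Fin (T + 1) → A),
            trajProb η p πe (T + 1) h.1 h.2 * g t h.1 :=
          Finset.sum_congr rfl fun t _ =>
            change_sum η p πb πe hp1 hπb1 hπe1 hsupp T t (g t) (hg t)
      _ = ∑ h : (Fin (T + 2) → S) × (Fin (T + 1) → A), ∑ t,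
            trajProb η p πe (T + 1) h.1 h.2 * g t h.1 := Finset.sum_comm
      _ = ∑ h : (Fin (T + 2) → S) × (Fin (T + 1) → A),
            trajProb η p πe (T + 1) h.1 h.2 * (∑ t, g t h.1) := by
          exact Finset.sum_congr rfl fun h _ => (Finset.mul_sum _ _ _).symm
  have hNum : ∫ ω, fnum (H 0 ω) ∂μ
      = ∑ h : (Fin (T + 2) → S) × (Fin (T + 1) → A),
          trajProb η p πe (T + 1) h.1 h.2 *
            (∑ t : Fin (T + 1),
              if φ (h.1 t.castSucc) = z ∧ φ (h.1 t.succ) = z' then (1 : ℝ) else 0) := by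
    rw [hlaw 0 fnum]
    exact hExp
      (fun t s => if φ (s t.castSucc) = z ∧ φ (s t.succ) = z' then (1 : ℝ) else 0)
      (fun t s s' hp' => by
        simp only [hp' t.castSucc (by simp), hp' t.succ (by simp)])
  have hDen : ∫ ω, fden (H 0 ω) ∂μ
      = ∑ h : (Fin (T + 2) → S) × (Fin (T + 1) → A),
          trajProb η p πe (T + 1) h.1 h.2 *
            (∑ t : Fin (T + 1), if φ (h.1 t.castSucc) = z then (1 : ℝ) else 0) := by
    rw [hlaw 0 fden]
    exact hExp
      (fun t s => if φ (s t.castSucc) = z then (1 : ℝ) else 0)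
      (fun t s s' hp' => by simp only [hp' t.castSucc (by simp)])
  -- integrability and identical distribution
  have hint : ∀ (i : ℕ) (f : (Fin (T + 2) → S) × (Fin (T + 1) → A) → ℝ),
      Integrable (fun ω => f (H i ω)) μ :=
    fun i f => (law_aux μ w hw1 (H i) (hlaw' i)).1 f
  have hID : ∀ (f : (Fin (T + 2) → S) × (Fin (T + 1) → A) → ℝ) (i : ℕ),
      ProbabilityTheory.IdentDistrib (fun ω => f (H i ω)) (fun ω => f (H 0 ω)) μ μ := by
    intro f i
    refine ⟨(hint i f).aestronglyMeasurable.aemeasurable,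
      (hint 0 f).aestronglyMeasurable.aemeasurable, ?_⟩
    ext E hE
    rw [Measure.map_apply_of_aemeasurable (hint i f).aestronglyMeasurable.aemeasurable hE,
      Measure.map_apply_of_aemeasurable (hint 0 f).aestronglyMeasurable.aemeasurable hE,
      law_preimage μ w hw1 (H i) (hlaw' i) f E, law_preimage μ w hw1 (H 0) (hlaw' 0) f E]
  have hIndep : ∀ f : (Fin (T + 2) → S) × (Fin (T + 1) → A) → ℝ,
      Pairwise (Function.onFun (ProbabilityTheory.IndepFun · · μ) fun i ω => f (H i ω)) := by
    intro f i j hij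
    exact (hindep.indepFun hij).comp measurable_from_top measurable_from_top
  have hslnum := ProbabilityTheory.strong_law_ae_real (fun i ω => fnum (H i ω))
    (hint 0 fnum) (hIndep fnum) (fun i => hID fnum i)
  have hslden := ProbabilityTheory.strong_law_ae_real (fun i ω => fden (H i ω))
    (hint 0 fden) (hIndep fden) (fun i => hID fden i)
  rw [hNum] at hslnum
  rw [hDen] at hslden
  filter_upwards [hslnum, hslden] with ω h1 h2
  have h3 := h1.div h2 hden
  refine Tendsto.congr' ?_ h3
  filter_upwards [eventually_ge_atTop 1] with n hn
  have hn' : (n : ℝ) ≠ 0 := Nat.cast_ne_zero.mpr (by omega)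
  have hcancel : ∀ x y c : ℝ, c ≠ 0 → (x / c) / (y / c) = x / y := by
    intro x y c hc
    rcases eq_or_ne y 0 with rfl | hy
    · simp
    · field_simp
  show ((∑ i ∈ Finset.range n, fnum (H i ω)) / (n : ℝ))
      / ((∑ i ∈ Finset.range n, fden (H i ω)) / (n : ℝ)) = _
  rw [hcancel _ _ _ hn']
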